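/- For the solenoid map with contraction a ∈ (0, 1/4), the k-th image f_S^k(𝕋_S) intersects each cross-sectional disk {φ} × D² in exactly 2^k disjoint disks, each of radius a^k, whose centers are the points v_k^{Γ} = a^k v_0 + Σ_{i=1}^{k} (a^{k−i}/2)·\bar{φ}_{i−1}^{Γ} indexed by binary sequences Γ ∈ {0,1}^k; in particular any two of these 2^k disks are pairwise disjoint. -/

import Mathlib

open Metric Set

/-- The solenoid map `f_S(φ, v) = (2φ mod 2π, a·v + φ̄/2)` on the solid torus,
written with the disk coordinate `v ∈ ℂ` and `φ̄ = e^{iφ}`. -/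
noncomputable def solenoidMap (a : ℝ) (p : Real.Angle × ℂ) : Real.Angle × ℂ :=
  ((2 : ℕ) • p.1, a * p.2 + Complex.exp (p.1.toReal * Complex.I) / 2)

/-- The open solid torus `𝕋_S = S¹ × D²`. -/
def solidTorus : Set (Real.Angle × ℂ) := {p | ‖p.2‖ < 1}

/-- The intermediate angles `θ_j` (with `θ_k = φ`, `θ_j = θ_{j+1}/2 + Γ_j·π`) of the
branch of `k`-th preimages of the angle `φ` under the doubling map selected by the
binary sequence `Γ ∈ {0,1}^k`. -/
noncomputable def solAngle (φ : ℝ) (k : ℕ) (Γ : Fin k → Bool) (j : ℕ) : ℝ :=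
  φ / 2 ^ (k - j) +
    ∑ i ∈ Finset.univ.filter fun i : Fin k => j ≤ (i : ℕ),
      (if Γ i then (1:ℝ) else 0) * Real.pi / 2 ^ ((i : ℕ) - j)

/-- The center `v_k^Γ = Σ_{i=1}^k (a^{k−i}/2)·φ̄_{i−1}^Γ` of the branch disk of
`f_S^k(𝕋_S)` in the cross-sectional disk at angle `φ`, indexed by `Γ ∈ {0,1}^k`. -/
noncomputable def solCenter (a φ : ℝ) (k : ℕ) (Γ : Fin k → Bool) : ℂ :=
  ∑ j ∈ Finset.range k,
    ((a ^ (k - 1 - j) / 2 : ℝ) : ℂ) * Complex.exp (solAngle φ k Γ j * Complex.I)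

/-! ### Auxiliary definitions and lemmas -/

/-- `e^{ix}` for a real `x`. -/
noncomputable def solE (x : ℝ) : ℂ := Complex.exp (x * Complex.I)

/-- `e^{iθ}` for an angle `θ`. -/
noncomputable def expA (θ : Real.Angle) : ℂ := Complex.exp (θ.toReal * Complex.I)

lemma solE_eq_of_sub_int (x y : ℝ) (n : ℤ) (h : x - y = 2 * Real.pi * n) :
    solE x = solE y := by
  have hx : x = y + n * (2 * Real.pi) := by linarith
  simp only [solE, hx]
  push_cast
  rw [add_mul, Complex.exp_add, mul_assoc, Complex.exp_int_mul_two_pi_mul_I, mul_one]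

lemma solE_coe_eq (x y : ℝ) (h : (x : Real.Angle) = (y : Real.Angle)) : solE x = solE y := by
  obtain ⟨n, hn⟩ := Real.Angle.angle_eq_iff_two_pi_dvd_sub.mp h
  exact solE_eq_of_sub_int x y n hn

lemma expA_coe (x : ℝ) : expA ((x : ℝ) : Real.Angle) = solE x := by
  have h : ((((x : Real.Angle)).toReal : Real.Angle)) = (x : Real.Angle) :=
    Real.Angle.coe_toReal _
  exact solE_coe_eq _ _ h

lemma solE_add_pi (x : ℝ) : solE (x + Real.pi) = - solE x := by
  simp only [solE]; push_cast
  rw [add_mul, Complex.exp_add, Complex.exp_pi_mul_I]; ring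

lemma norm_solE (x : ℝ) : ‖solE x‖ = 1 := by
  simp [solE, Complex.norm_exp]

/-- The explicit formula for the iterates of the solenoid map. -/
lemma solenoid_iter (a : ℝ) (k : ℕ) (θ : Real.Angle) (v : ℂ) :
    (solenoidMap a)^[k] (θ, v) =
      ((2 ^ k : ℕ) • θ, (a : ℂ) ^ k * v +
        ∑ j ∈ Finset.range k, ((a ^ (k - 1 - j) / 2 : ℝ) : ℂ) * expA ((2 ^ j : ℕ) • θ)) := by
  induction k with
  | zero => simp
  | succ k ih =>
    rw [Function.iterate_succ_apply', ih]
    unfold solenoidMap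
    refine Prod.ext ?_ ?_
    · show (2 : ℕ) • ((2 ^ k : ℕ) • θ) = (2 ^ (k+1) : ℕ) • θ
      rw [smul_smul]
      congr 1
      ring
    · show (a : ℂ) * ((a:ℂ)^k * v + _) + Complex.exp (((2^k:ℕ) • θ).toReal * Complex.I)/2 = _
      rw [Finset.sum_range_succ]
      have hterm : ((a ^ (k + 1 - 1 - k) / 2 : ℝ) : ℂ) * expA ((2 ^ k : ℕ) • θ)
          = Complex.exp (((2^k:ℕ) • θ).toReal * Complex.I) / 2 := by
        simp only [Nat.add_sub_cancel, Nat.sub_self, pow_zero, expA]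
        push_cast
        ring
      rw [hterm, mul_add, Finset.mul_sum]
      have hcongr : ∀ j ∈ Finset.range k,
          (a : ℂ) * (((a ^ (k - 1 - j) / 2 : ℝ) : ℂ) * expA ((2 ^ j : ℕ) • θ))
          = ((a ^ (k + 1 - 1 - j) / 2 : ℝ) : ℂ) * expA ((2 ^ j : ℕ) • θ) := by
        intro j hj
        rw [Finset.mem_range] at hj
        have h1 : k + 1 - 1 - j = (k - 1 - j) + 1 := by omega
        rw [h1, pow_succ]
        push_cast
        ring
      rw [Finset.sum_congr rfl hcongr, ← mul_assoc, ← pow_succ']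
      ring

lemma solAngle_top (φ : ℝ) (k : ℕ) (Γ : Fin k → Bool) : solAngle φ k Γ k = φ := by
  unfold solAngle
  rw [Finset.sum_eq_zero, Nat.sub_self, pow_zero, div_one, add_zero]
  intro i hi
  rw [Finset.mem_filter] at hi
  exact absurd hi.2 (by omega)

lemma solAngle_succ (φ : ℝ) (k : ℕ) (Γ : Fin k → Bool) (j : ℕ) (hj : j < k) :
    2 * solAngle φ k Γ j = solAngle φ k Γ (j+1) + (if Γ ⟨j, hj⟩ then 2*Real.pi else 0) := by
  unfold solAngle
  have hfilter : (Finset.univ.filter fun i : Fin k => j ≤ (i:ℕ)) =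
      insert (⟨j,hj⟩ : Fin k) (Finset.univ.filter fun i : Fin k => j+1 ≤ (i:ℕ)) := by
    ext i
    simp only [Finset.mem_filter, Finset.mem_insert, Finset.mem_univ, true_and, Fin.ext_iff]
    omega
  rw [hfilter, Finset.sum_insert (by simp)]
  have hφ : 2 * (φ / 2^(k-j)) = φ / 2^(k-(j+1)) := by
    have h1 : k - j = (k - (j+1)) + 1 := by omega
    rw [h1, pow_succ]; ring
  have hsum : 2 * ∑ i ∈ Finset.univ.filter fun i : Fin k => j+1 ≤ (i:ℕ),
      (if Γ i then (1:ℝ) else 0) * Real.pi / 2 ^ ((i:ℕ) - j)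
      = ∑ i ∈ Finset.univ.filter fun i : Fin k => j+1 ≤ (i:ℕ),
      (if Γ i then (1:ℝ) else 0) * Real.pi / 2 ^ ((i:ℕ) - (j+1)) := by
    rw [Finset.mul_sum]
    refine Finset.sum_congr rfl ?_
    intro i hi
    rw [Finset.mem_filter] at hi
    have h1 : (i:ℕ) - j = ((i:ℕ) - (j+1)) + 1 := by omega
    rw [h1, pow_succ]
    ring
  have hterm : 2 * ((if Γ ⟨j,hj⟩ then (1:ℝ) else 0) * Real.pi / 2 ^ (j - j))
      = (if Γ ⟨j,hj⟩ then 2*Real.pi else 0) := by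
    rw [Nat.sub_self, pow_zero, div_one]
    split <;> ring
  calc 2 * (φ / 2 ^ (k - j) + ((if Γ ⟨j,hj⟩ then (1:ℝ) else 0) * Real.pi / 2 ^ ((j:ℕ) - j)
          + ∑ i ∈ Finset.univ.filter fun i : Fin k => j+1 ≤ (i:ℕ),
            (if Γ i then (1:ℝ) else 0) * Real.pi / 2 ^ ((i:ℕ) - j)))
      = 2 * (φ / 2^(k-j)) + (2 * ((if Γ ⟨j,hj⟩ then (1:ℝ) else 0) * Real.pi / 2 ^ (j - j))
          + 2 * ∑ i ∈ Finset.univ.filter fun i : Fin k => j+1 ≤ (i:ℕ),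
            (if Γ i then (1:ℝ) else 0) * Real.pi / 2 ^ ((i:ℕ) - j)) := by ring
    _ = _ := by rw [hφ, hsum, hterm]; ring

lemma coe_pow_smul (φ : ℝ) (k : ℕ) (Γ : Fin k → Bool) :
    ∀ j, j ≤ k → ((2 ^ j : ℕ) • (↑(solAngle φ k Γ 0) : Real.Angle)) = ↑(solAngle φ k Γ j) := by
  intro j
  induction j with
  | zero => intro _; simp
  | succ j ih =>
    intro hj
    have hjk : j < k := by omega
    have h2 : ((2:ℕ)^(j+1)) • (↑(solAngle φ k Γ 0) : Real.Angle)
        = (2:ℕ) • ((2^j:ℕ) • (↑(solAngle φ k Γ 0) : Real.Angle)) := by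
      rw [smul_smul]; congr 1; ring
    rw [h2, ih (by omega)]
    have hcoe : ((2:ℕ) • (↑(solAngle φ k Γ j) : Real.Angle)) = ↑(2 * solAngle φ k Γ j) := by
      rw [← Real.Angle.coe_nsmul]
      norm_num
    rw [hcoe, solAngle_succ φ k Γ j hjk, Real.Angle.coe_add]
    split
    · rw [Real.Angle.coe_two_pi, add_zero]
    · rw [Real.Angle.coe_zero, add_zero]

lemma coe_pow_smul_top (φ : ℝ) (k : ℕ) (Γ : Fin k → Bool) :
    ((2 ^ k : ℕ) • (↑(solAngle φ k Γ 0) : Real.Angle)) = ↑φ := by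
  rw [coe_pow_smul φ k Γ k le_rfl, solAngle_top]

lemma bits_sum : ∀ (k r : ℕ), r < 2 ^ k →
    ∑ j ∈ Finset.range k, (if r.testBit j then 2 ^ j else 0) = r := by
  intro k
  induction k with
  | zero => intro r hr; interval_cases r; simp
  | succ k ih =>
    intro r hr
    rw [Finset.sum_range_succ']
    have h2 : ∀ j, (if r.testBit (j + 1) then 2 ^ (j+1) else 0)
        = 2 * (if (r / 2).testBit j then 2 ^ j else 0) := by
      intro j
      rw [Nat.testBit_succ]
      split <;> ring
    simp only [h2, ← Finset.mul_sum]
    rw [ih (r / 2) (by omega)]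
    have h0 : r.testBit 0 = decide (r % 2 = 1) := Nat.testBit_zero r
    rw [h0]
    rcases Nat.mod_two_eq_zero_or_one r with h | h <;> simp [h] <;> omega

lemma solAngle_zero_eq (φ : ℝ) (k r : ℕ) (hr : r < 2 ^ k) :
    solAngle φ k (fun i => r.testBit (k - 1 - (i:ℕ))) 0
      = φ / 2 ^ k + 2 * Real.pi * r / 2 ^ k := by
  unfold solAngle
  have hf : (Finset.univ.filter fun i : Fin k => 0 ≤ (i:ℕ)) = Finset.univ := by
    simp
  rw [hf, Nat.sub_zero]
  congr 1
  have e1 : ∑ i : Fin k, (if r.testBit (k - 1 - (i:ℕ)) then (1:ℝ) else 0) * Real.pi / 2 ^ ((i:ℕ) - 0)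
      = ∑ i ∈ Finset.range k, (if r.testBit (k - 1 - i) then (1:ℝ) else 0) * Real.pi / 2 ^ i := by
    rw [Fin.sum_univ_eq_sum_range (fun i => (if r.testBit (k - 1 - i) then (1:ℝ) else 0) * Real.pi / 2 ^ (i - 0))]
    exact Finset.sum_congr rfl fun i _ => by rw [Nat.sub_zero]
  rw [e1]
  have e2 : ∑ i ∈ Finset.range k, (if r.testBit (k - 1 - i) then (1:ℝ) else 0) * Real.pi / 2 ^ i
      = ∑ j ∈ Finset.range k, (if r.testBit j then (1:ℝ) else 0) * Real.pi / 2 ^ (k - 1 - j) := by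
    rw [← Finset.sum_range_reflect (fun j => (if r.testBit j then (1:ℝ) else 0) * Real.pi / 2 ^ (k - 1 - j)) k]
    refine Finset.sum_congr rfl fun i hi => ?_
    rw [Finset.mem_range] at hi
    have h : k - 1 - (k - 1 - i) = i := by omega
    rw [h]
  rw [e2]
  have e3 : ∀ j ∈ Finset.range k, (if r.testBit j then (1:ℝ) else 0) * Real.pi / 2 ^ (k - 1 - j)
      = (2 * Real.pi / 2 ^ k) * (if r.testBit j then (2:ℝ) ^ j else 0) := by
    intro j hj
    rw [Finset.mem_range] at hj
    have hk : k = (k - 1 - j) + j + 1 := by omega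
    split
    · rw [hk, Nat.add_sub_cancel, Nat.add_sub_cancel, pow_add, pow_add, pow_one]
      have h1 : (2:ℝ) ^ (k-1-j) ≠ 0 := by positivity
      have h2 : (2:ℝ) ^ j ≠ 0 := by positivity
      field_simp
    · ring
  rw [Finset.sum_congr rfl e3, ← Finset.mul_sum]
  have e4 : ∑ j ∈ Finset.range k, (if r.testBit j then (2:ℝ) ^ j else 0) = r := by
    have hb := bits_sum k r hr
    calc ∑ j ∈ Finset.range k, (if r.testBit j then (2:ℝ) ^ j else 0)
        = ((∑ j ∈ Finset.range k, (if r.testBit j then 2 ^ j else 0) : ℕ) : ℝ) := by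
          push_cast
          exact Finset.sum_congr rfl fun j _ => by split <;> simp
      _ = r := by rw [hb]
  rw [e4]
  ring

/-- Every `2^k`-th preimage angle of `φ` is of the form `solAngle φ k Γ 0`. -/
lemma exists_branch (φ : ℝ) (k : ℕ) (θ : Real.Angle)
    (h : (2 ^ k : ℕ) • θ = (φ : Real.Angle)) :
    ∃ Γ : Fin k → Bool, θ = ↑(solAngle φ k Γ 0) := by
  set t := θ.toReal with ht
  have hθ : (↑t : Real.Angle) = θ := Real.Angle.coe_toReal θ
  have h' : ((2 ^ k * t : ℝ) : Real.Angle) = (φ : Real.Angle) := by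
    have hh : ((2 ^ k : ℕ) • t : ℝ) = 2 ^ k * t := by
      rw [nsmul_eq_mul]; push_cast; ring
    rw [← hh, Real.Angle.coe_nsmul, hθ, h]
  obtain ⟨n, hn⟩ := Real.Angle.angle_eq_iff_two_pi_dvd_sub.mp h'
  set q : ℤ := n / 2 ^ k with hq
  set rz : ℤ := n % 2 ^ k with hrz
  have h2kz : (0:ℤ) < 2 ^ k := by positivity
  have hrz0 : 0 ≤ rz := Int.emod_nonneg n (by positivity)
  have hrzlt : rz < 2 ^ k := Int.emod_lt_of_pos n h2kz
  set r : ℕ := rz.toNat with hrdef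
  have hrcast : (r : ℤ) = rz := Int.toNat_of_nonneg hrz0
  have hrlt : r < 2 ^ k := by zify; rw [hrcast]; exact hrzlt
  have hnqr : n = 2 ^ k * q + r := by
    rw [hrcast, hq, hrz]; exact (Int.mul_ediv_add_emod n (2^k)).symm
  refine ⟨fun i => r.testBit (k - 1 - (i:ℕ)), ?_⟩
  rw [solAngle_zero_eq φ k r hrlt, ← hθ]
  refine Real.Angle.angle_eq_iff_two_pi_dvd_sub.mpr ⟨q, ?_⟩
  have h2k : (2:ℝ) ^ k ≠ 0 := by positivity
  have hnr : (n:ℝ) = 2 ^ k * q + r := by exact_mod_cast congrArg (Int.cast : ℤ → ℝ) hnqr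
  have ht' : 2 ^ k * t = φ + 2 * Real.pi * n := by linarith [hn]
  have hsplit : 2 * Real.pi * (n:ℝ) = 2 * Real.pi * 2 ^ k * q + 2 * Real.pi * r := by
    rw [hnr]; ring
  field_simp
  linarith [ht', hsplit]

/-- The branch sum equals the branch disk center. -/
lemma sum_expA_eq (a φ : ℝ) (k : ℕ) (Γ : Fin k → Bool) :
    ∑ j ∈ Finset.range k, ((a ^ (k - 1 - j) / 2 : ℝ) : ℂ) *
        expA ((2^j:ℕ) • (↑(solAngle φ k Γ 0) : Real.Angle))
      = solCenter a φ k Γ := by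
  unfold solCenter
  refine Finset.sum_congr rfl fun j hj => ?_
  rw [Finset.mem_range] at hj
  rw [coe_pow_smul φ k Γ j (by omega), expA_coe]
  rfl

lemma solAngle_eq_of_agree (φ : ℝ) (k : ℕ) (Γ Γ' : Fin k → Bool) (j : ℕ)
    (h : ∀ i : Fin k, j ≤ (i:ℕ) → Γ i = Γ' i) :
    solAngle φ k Γ j = solAngle φ k Γ' j := by
  unfold solAngle
  congr 1
  refine Finset.sum_congr rfl fun i hi => ?_
  rw [Finset.mem_filter] at hi
  rw [h i hi.2]

lemma solAngle_sub (φ : ℝ) (k : ℕ) (Γ Γ' : Fin k → Bool) (m : Fin k)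
    (hagree : ∀ i : Fin k, (m:ℕ) < (i:ℕ) → Γ i = Γ' i) :
    solAngle φ k Γ' m - solAngle φ k Γ m
      = ((if Γ' m then (1:ℝ) else 0) - (if Γ m then (1:ℝ) else 0)) * Real.pi := by
  unfold solAngle
  have key : ∑ i ∈ Finset.univ.filter fun i : Fin k => (m:ℕ) ≤ (i:ℕ),
        ((if Γ' i then (1:ℝ) else 0) * Real.pi / 2 ^ ((i:ℕ) - m)
         - (if Γ i then (1:ℝ) else 0) * Real.pi / 2 ^ ((i:ℕ) - m))
      = ((if Γ' m then (1:ℝ) else 0) - (if Γ m then (1:ℝ) else 0)) * Real.pi := by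
    rw [Finset.sum_eq_single m]
    · rw [Nat.sub_self, pow_zero]; ring
    · intro i hi hne
      rw [Finset.mem_filter] at hi
      have : (m:ℕ) < (i:ℕ) := by
        rcases lt_or_eq_of_le hi.2 with h | h
        · exact h
        · exact absurd (Fin.ext h.symm) hne
      rw [hagree i this]; ring
    · intro hm
      exact absurd (Finset.mem_filter.mpr ⟨Finset.mem_univ m, le_rfl⟩) hm
  rw [← key, Finset.sum_sub_distrib]
  ring

lemma geom_third (a : ℝ) (ha0 : 0 ≤ a) (ha4 : a ≤ 1/4) :
    ∀ m : ℕ, ∑ j ∈ Finset.range m, a ^ (j+1) ≤ 1/3 := by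
  intro m
  induction m with
  | zero => norm_num
  | succ m ih =>
    rw [Finset.sum_range_succ' (fun j => a ^ (j+1)) m]
    have e : ∑ j ∈ Finset.range m, a ^ (j+1+1) = a * ∑ j ∈ Finset.range m, a ^ (j+1) := by
      rw [Finset.mul_sum]
      exact Finset.sum_congr rfl fun j _ => by ring
    rw [e]
    have h1 : a * ∑ j ∈ Finset.range m, a ^ (j+1) ≤ a * (1/3) :=
      mul_le_mul_of_nonneg_left ih ha0
    have hp1 : a ^ (0+1) = a := by norm_num
    rw [hp1]
    linarith

/-- The centers of distinct branch disks are at distance at least `2 a^k`. -/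
lemma centers_far (a : ℝ) (ha0 : 0 < a) (ha4 : a < 1/4) (φ : ℝ) (k : ℕ)
    (Γ Γ' : Fin k → Bool) (hne : Γ ≠ Γ') :
    2 * a ^ k ≤ dist (solCenter a φ k Γ) (solCenter a φ k Γ') := by
  have ha1 : a < 1 := by linarith
  obtain ⟨i0, hi0⟩ := Function.ne_iff.mp hne
  set s : Finset (Fin k) := Finset.univ.filter fun i => Γ i ≠ Γ' i with hs
  have hsne : s.Nonempty := ⟨i0, Finset.mem_filter.mpr ⟨Finset.mem_univ _, hi0⟩⟩
  set m : Fin k := s.max' hsne with hm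
  have hdm : Γ m ≠ Γ' m := (Finset.mem_filter.mp (s.max'_mem hsne)).2
  have hagree : ∀ i : Fin k, (m:ℕ) < (i:ℕ) → Γ i = Γ' i := by
    intro i hi
    by_contra hc
    have h1 : i ∈ s := Finset.mem_filter.mpr ⟨Finset.mem_univ _, hc⟩
    have h2 := s.le_max' i h1
    exact absurd (lt_of_le_of_lt h2 (by exact_mod_cast hi)) (lt_irrefl _)
  have hmk : (m:ℕ) < k := m.isLt
  set d : ℕ → ℂ := fun j => ((a ^ (k - 1 - j) / 2 : ℝ) : ℂ) *
      (solE (solAngle φ k Γ j) - solE (solAngle φ k Γ' j)) with hd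
  have hdiff : solCenter a φ k Γ - solCenter a φ k Γ' = ∑ j ∈ Finset.range k, d j := by
    unfold solCenter
    rw [← Finset.sum_sub_distrib]
    exact Finset.sum_congr rfl fun j _ => by rw [hd]; simp only [solE]; ring
  have hvan : ∀ j ∈ Finset.range k, j ∉ Finset.range ((m:ℕ)+1) → d j = 0 := by
    intro j hj hj'
    rw [Finset.mem_range] at hj hj'
    have hmj : (m:ℕ) < j := by omega
    have heq : solAngle φ k Γ j = solAngle φ k Γ' j :=
      solAngle_eq_of_agree φ k Γ Γ' j fun i hi => hagree i (by omega)
    rw [hd]; simp [heq]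
  have hrestrict : ∑ j ∈ Finset.range k, d j = ∑ j ∈ Finset.range ((m:ℕ)+1), d j :=
    (Finset.sum_subset (Finset.range_subset_range.mpr (by omega)) hvan).symm
  have hsub := solAngle_sub φ k Γ Γ' m hagree
  have hEm : solE (solAngle φ k Γ' m) = - solE (solAngle φ k Γ m) := by
    rcases Bool.eq_false_or_eq_true (Γ m) with h1 | h1 <;>
      rcases Bool.eq_false_or_eq_true (Γ' m) with h2 | h2
    · rw [h1, h2] at hdm; exact absurd rfl hdm
    · rw [h1, h2] at hsub; norm_num at hsub
      have h3 : solAngle φ k Γ m = solAngle φ k Γ' m + Real.pi := by linarith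
      rw [h3, solE_add_pi, neg_neg]
    · rw [h1, h2] at hsub; norm_num at hsub
      have h3 : solAngle φ k Γ' m = solAngle φ k Γ m + Real.pi := by linarith
      rw [h3, solE_add_pi]
    · rw [h1, h2] at hdm; exact absurd rfl hdm
  have hdmnorm : ‖d (m:ℕ)‖ = a ^ (k - 1 - (m:ℕ)) := by
    rw [hd]
    simp only [hEm, sub_neg_eq_add]
    have e2 : solE (solAngle φ k Γ m) + solE (solAngle φ k Γ m)
        = 2 * solE (solAngle φ k Γ m) := by ring
    rw [e2, norm_mul, norm_mul, norm_solE, Complex.norm_real]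
    have h2 : ‖(2:ℂ)‖ = 2 := by norm_num
    rw [h2, Real.norm_eq_abs, abs_of_pos (by positivity)]
    ring
  have hlow : ‖∑ j ∈ Finset.range (m:ℕ), d j‖ ≤ a ^ (k - 1 - (m:ℕ)) / 3 := by
    calc ‖∑ j ∈ Finset.range (m:ℕ), d j‖ ≤ ∑ j ∈ Finset.range (m:ℕ), ‖d j‖ :=
          norm_sum_le _ _
      _ ≤ ∑ j ∈ Finset.range (m:ℕ), a ^ (k - 1 - j) := by
          refine Finset.sum_le_sum fun j hj => ?_
          rw [hd, norm_mul, Complex.norm_real, Real.norm_eq_abs, abs_of_pos (by positivity)]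
          have hEE : ‖solE (solAngle φ k Γ j) - solE (solAngle φ k Γ' j)‖ ≤ 2 := by
            calc ‖solE (solAngle φ k Γ j) - solE (solAngle φ k Γ' j)‖
                ≤ ‖solE (solAngle φ k Γ j)‖ + ‖solE (solAngle φ k Γ' j)‖ := norm_sub_le _ _
              _ = 2 := by rw [norm_solE, norm_solE]; norm_num
          nlinarith [pow_pos ha0 (k - 1 - j),
            norm_nonneg (solE (solAngle φ k Γ j) - solE (solAngle φ k Γ' j))]
      _ = ∑ j ∈ Finset.range (m:ℕ), a ^ (k - 1 - (m:ℕ)) * a ^ ((m:ℕ) - j) := by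
          refine Finset.sum_congr rfl fun j hj => ?_
          rw [Finset.mem_range] at hj
          rw [← pow_add]
          congr 1
          omega
      _ = a ^ (k - 1 - (m:ℕ)) * ∑ j ∈ Finset.range (m:ℕ), a ^ ((m:ℕ) - j) := by
          rw [Finset.mul_sum]
      _ ≤ a ^ (k - 1 - (m:ℕ)) / 3 := by
          have e1 : ∑ j ∈ Finset.range (m:ℕ), a ^ ((m:ℕ) - j)
              = ∑ j ∈ Finset.range (m:ℕ), a ^ (j + 1) := by
            rw [← Finset.sum_range_reflect (fun j => a ^ (j+1)) (m:ℕ)]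
            refine Finset.sum_congr rfl fun j hj => ?_
            rw [Finset.mem_range] at hj
            congr 1
            omega
          rw [e1]
          have hgeo := geom_third a (le_of_lt ha0) (le_of_lt ha4) (m:ℕ)
          have hp := pow_pos ha0 (k - 1 - (m:ℕ))
          nlinarith [mul_le_mul_of_nonneg_left hgeo (le_of_lt hp)]
  rw [dist_eq_norm, hdiff, hrestrict, Finset.sum_range_succ]
  have htri : ‖d (m:ℕ)‖ ≤ ‖∑ j ∈ Finset.range (m:ℕ), d j + d (m:ℕ)‖
      + ‖∑ j ∈ Finset.range (m:ℕ), d j‖ := by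
    calc ‖d (m:ℕ)‖ = ‖(∑ j ∈ Finset.range (m:ℕ), d j + d (m:ℕ))
        - ∑ j ∈ Finset.range (m:ℕ), d j‖ := by congr 1; ring
      _ ≤ _ := norm_sub_le _ _
  have hnorm : (2/3) * a ^ (k - 1 - (m:ℕ))
      ≤ ‖∑ j ∈ Finset.range (m:ℕ), d j + d (m:ℕ)‖ := by
    rw [hdmnorm] at htri
    linarith
  have hsplit : a ^ k = a ^ (k - 1 - (m:ℕ)) * a ^ ((m:ℕ) + 1) := by
    rw [← pow_add]
    congr 1
    omega
  have hap : a ^ ((m:ℕ)+1) ≤ a := by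
    calc a ^ ((m:ℕ)+1) ≤ a ^ 1 := pow_le_pow_of_le_one (le_of_lt ha0) (le_of_lt ha1) (by omega)
      _ = a := pow_one a
  have hp := pow_pos ha0 (k - 1 - (m:ℕ))
  have h1 : a ^ (k-1-(m:ℕ)) * a ^ ((m:ℕ)+1) ≤ a ^ (k-1-(m:ℕ)) * a :=
    mul_le_mul_of_nonneg_left hap (le_of_lt hp)
  have h2 : a ^ (k-1-(m:ℕ)) * a ≤ a ^ (k-1-(m:ℕ)) * (1/4) :=
    mul_le_mul_of_nonneg_left (le_of_lt ha4) (le_of_lt hp)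
  linarith

/-- For `0 < a < 1/4`, the `k`-th image of the solid torus under the solenoid map meets
the cross-sectional disk at angle `φ` in exactly the `2^k` disks of radius `a^k`
centered at the points `v_k^Γ`, `Γ ∈ {0,1}^k`, and these disks are pairwise disjoint. -/
theorem solenoid_cross_section_disks
    (a : ℝ) (ha : a ∈ Set.Ioo (0:ℝ) (1/4)) (φ : ℝ) (k : ℕ) :
    (((solenoidMap a)^[k] '' solidTorus) ∩ {p | p.1 = (φ : Real.Angle)} =
      (fun v : ℂ => ((φ : Real.Angle), v)) ''
        (⋃ Γ : Fin k → Bool, ball (solCenter a φ k Γ) (a ^ k))) ∧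
    Pairwise fun Γ Γ' : Fin k → Bool =>
      Disjoint (ball (solCenter a φ k Γ) (a ^ k)) (ball (solCenter a φ k Γ') (a ^ k)) := by
  obtain ⟨ha0, ha4⟩ := ha
  have hak : (0:ℝ) < a ^ k := pow_pos ha0 k
  constructor
  · ext p
    constructor
    · rintro ⟨⟨⟨θ, v⟩, hv, hfk⟩, hp1⟩
      have hv' : ‖v‖ < 1 := by
        simpa [solidTorus] using hv
      subst hfk
      simp only [Set.mem_setOf_eq] at hp1
      rw [solenoid_iter] at hp1
      obtain ⟨Γ, hθ⟩ := exists_branch φ k θ hp1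
      subst hθ
      refine ⟨(a:ℂ)^k * v + solCenter a φ k Γ, ?_, ?_⟩
      · refine Set.mem_iUnion.mpr ⟨Γ, ?_⟩
        rw [mem_ball, dist_eq_norm, add_sub_cancel_right, norm_mul, norm_pow,
          Complex.norm_real, Real.norm_eq_abs, abs_of_pos ha0]
        calc a ^ k * ‖v‖ < a ^ k * 1 := by
              exact mul_lt_mul_of_pos_left hv' hak
          _ = a ^ k := mul_one _
      · rw [solenoid_iter]
        refine Prod.ext ?_ ?_
        · exact (coe_pow_smul_top φ k Γ).symm
        · exact congrArg ((a:ℂ)^k * v + ·) (sum_expA_eq a φ k Γ).symm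
    · rintro ⟨w, hw, hpw⟩
      obtain ⟨Γ, hball⟩ := Set.mem_iUnion.mp hw
      rw [mem_ball, dist_eq_norm] at hball
      have hane : ((a:ℂ))^k ≠ 0 := by
        simp only [ne_eq, pow_eq_zero_iff', Complex.ofReal_eq_zero]
        intro hcon
        exact absurd hcon.1 (ne_of_gt ha0)
      set v : ℂ := ((a:ℂ)^k)⁻¹ * (w - solCenter a φ k Γ) with hvdef
      have hv1 : ‖v‖ < 1 := by
        rw [hvdef]
        rw [norm_mul, norm_inv]
        have h1 : ‖((a:ℂ)^k)‖ = a ^ k := by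
          rw [norm_pow, Complex.norm_real, Real.norm_eq_abs, abs_of_pos ha0]
        rw [h1]
        rw [inv_mul_lt_one₀ hak]  -- may need different lemma
        simpa using hball
      refine ⟨⟨⟨(↑(solAngle φ k Γ 0) : Real.Angle), v⟩, hv1, ?_⟩, ?_⟩
      · rw [solenoid_iter, sum_expA_eq]
        rw [← hpw]
        refine Prod.ext ?_ ?_
        · exact coe_pow_smul_top φ k Γ
        · show (a:ℂ)^k * v + solCenter a φ k Γ = w
          rw [hvdef, ← mul_assoc, mul_inv_cancel₀ hane, one_mul]
          ring
      · rw [← hpw]; rfl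
  · intro Γ Γ' hne
    refine Metric.ball_disjoint_ball ?_
    have := centers_far a ha0 ha4 φ k Γ Γ' hne
    linarith
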